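/- arXiv:1509.04704 — 2 statements merged into one kernel-verified Lean document; each statement's English description precedes it below -/
import Mathlib

section
/- Let {a_h} be a real sequence satisfying the recursion a_h = c_h(c·a_{h−1} + C + d_h), where |1 − c_h| = O(ρ^h), |d_h| = O(ρ^h), C is a constant, and 0 ≤ c < ρ < 1. Then |a_h − C/(1−c)| = O(ρ^h). -/
set_option maxHeartbeats 1000000 in
/-- If `a h = c h * (c' * a (h-1) + C + d h)` with `|1 - c h| = O(ρ^h)`,
`|d h| = O(ρ^h)`, and `0 ≤ c' < ρ < 1`, then `|a h - C/(1-c')| = O(ρ^h)`. -/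
theorem stmt_4 (a c d : ℕ → ℝ) (c' C ρ : ℝ)
    (hc' : 0 ≤ c') (hcρ : c' < ρ) (hρ : ρ < 1)
    (hrec : ∀ h : ℕ, 1 ≤ h → a h = c h * (c' * a (h - 1) + C + d h))
    (hc : ∃ M : ℝ, ∀ h : ℕ, |1 - c h| ≤ M * ρ ^ h)
    (hd : ∃ M : ℝ, ∀ h : ℕ, |d h| ≤ M * ρ ^ h) :
    ∃ M : ℝ, ∀ h : ℕ, |a h - C / (1 - c')| ≤ M * ρ ^ h := by
  obtain ⟨M1, hM1⟩ := hc
  obtain ⟨M2, hM2⟩ := hd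
  have hρ0 : 0 < ρ := lt_of_le_of_lt hc' hcρ
  have hc1 : c' < 1 := lt_trans hcρ hρ
  have h1c : (0:ℝ) < 1 - c' := by linarith
  set L : ℝ := C / (1 - c') with hLdef
  have hLC : c' * L + C = L := by
    rw [hLdef]
    field_simp
    ring
  clear_value L
  set M : ℝ := max M1 (max M2 0) with hMdef
  have hM0 : 0 ≤ M := le_trans (le_max_right M2 0) (le_max_right _ _)
  have hb1 : ∀ h, |1 - c h| ≤ M * ρ ^ h := fun h =>
    le_trans (hM1 h) (mul_le_mul_of_nonneg_right (le_max_left _ _) (by positivity))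
  have hb2 : ∀ h, |d h| ≤ M * ρ ^ h := fun h =>
    le_trans (hM2 h) (mul_le_mul_of_nonneg_right
      (le_trans (le_max_left M2 0) (le_max_right _ _)) (by positivity))
  clear_value M
  set q : ℝ := c' / ρ with hqdef
  have hq0 : 0 ≤ q := div_nonneg hc' hρ0.le
  have hq1 : q < 1 := (div_lt_one hρ0).2 hcρ
  clear_value q
  -- choose N with M * ρ ^ N ≤ (1 - q) / 2
  obtain ⟨N, hN⟩ : ∃ N : ℕ, M * ρ ^ N ≤ (1 - q) / 2 := by
    obtain ⟨N, hN⟩ := exists_pow_lt_of_lt_one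
      (show (0:ℝ) < (1 - q) / (2 * (M + 1)) from div_pos (by linarith) (by linarith)) hρ
    refine ⟨N, ?_⟩
    have h1 : M * ρ ^ N ≤ (M + 1) * ρ ^ N := by
      have : (0:ℝ) ≤ ρ ^ N := by positivity
      nlinarith
    have h2 : (M + 1) * ρ ^ N < (M + 1) * ((1 - q) / (2 * (M + 1))) :=
      mul_lt_mul_of_pos_left hN (by linarith)
    have h3 : (M + 1) * ((1 - q) / (2 * (M + 1))) = (1 - q) / 2 := by
      field_simp
    linarith
  set B : ℝ := M * (|L| + 1 + M) with hBdef
  have hB0 : 0 ≤ B := by positivity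
  clear_value B
  obtain ⟨S, hS0, hS⟩ : ∃ S : ℝ, 0 ≤ S ∧ ∀ h ≤ N, |a h - L| ≤ S := by
    refine ⟨(Finset.range (N + 1)).sup' ⟨0, by simp⟩ (fun h => |a h - L|), ?_, ?_⟩
    · exact le_trans (abs_nonneg (a 0 - L)) (Finset.le_sup' (fun h => |a h - L|) (Finset.mem_range.2 (Nat.succ_pos N)))
    · exact fun h hh => Finset.le_sup' (fun h => |a h - L|) (Finset.mem_range.2 (Nat.lt_succ_of_le hh))
  set K : ℝ := max (2 * B / (1 - q)) (S / ρ ^ N) with hKdef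
  have hK0 : 0 ≤ K := le_trans (by positivity) (le_max_right _ _)
  have hKB : 2 * B / (1 - q) ≤ K := le_max_left _ _
  have hKS : S / ρ ^ N ≤ K := le_max_right _ _
  clear_value K
  have hKB' : B ≤ K * (1 - q) / 2 := by
    have := (div_le_iff₀ (by linarith : (0:ℝ) < 1 - q)).1 hKB
    linarith
  refine ⟨K, ?_⟩
  have base : ∀ h ≤ N, |a h - L| ≤ K * ρ ^ h := by
    intro h hh
    have h1 : ρ ^ N ≤ ρ ^ h := pow_le_pow_of_le_one hρ0.le hρ.le hh
    have h2 : S / ρ ^ N ≤ K := hKS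
    have h3 : |a h - L| ≤ S := hS h hh
    have hpN : (0:ℝ) < ρ ^ N := by positivity
    have h4 : S ≤ K * ρ ^ h := by
      have : S / ρ ^ N * ρ ^ N ≤ K * ρ ^ h := by
        apply mul_le_mul h2 h1 hpN.le hK0
      rwa [div_mul_cancel₀ _ hpN.ne'] at this
    linarith
  intro h
  induction h with
  | zero => exact base 0 (Nat.zero_le N)
  | succ n ih =>
    by_cases hn : n + 1 ≤ N
    · exact base (n + 1) hn
    · push_neg at hn
      have hNn : N ≤ n + 1 := le_of_lt hn
      have hrn := hrec (n + 1) (Nat.le_add_left 1 n)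
      simp only [Nat.add_sub_cancel] at hrn
      set ε : ℝ := 1 - c (n + 1) with hεdef
      have hε : |ε| ≤ M * ρ ^ (n + 1) := by rw [hεdef]; exact hb1 (n + 1)
      clear_value ε
      have hdb : |d (n + 1)| ≤ M * ρ ^ (n + 1) := hb2 (n + 1)
      have hid : a (n + 1) - L =
          (1 - ε) * c' * (a n - L) + (1 - ε) * d (n + 1) - ε * L := by
        rw [hrn]
        have : c (n + 1) = 1 - ε := by rw [hεdef]; ring
        rw [this]
        linear_combination (1 - ε) * hLC
      have habs : |a (n + 1) - L| ≤
          (1 + M * ρ ^ (n + 1)) * c' * |a n - L|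
            + (1 + M * ρ ^ (n + 1)) * (M * ρ ^ (n + 1)) + M * ρ ^ (n + 1) * |L| := by
        rw [hid]
        have t1 : |(1 - ε) * c' * (a n - L) + (1 - ε) * d (n + 1) - ε * L| ≤
            |(1 - ε) * c' * (a n - L)| + |(1 - ε) * d (n + 1)| + |ε * L| := by
          calc _ ≤ |(1 - ε) * c' * (a n - L) + (1 - ε) * d (n + 1)| + |ε * L| :=
                abs_sub _ _
            _ ≤ _ := by gcongr; exact abs_add_le _ _
        have h1ε : |1 - ε| ≤ 1 + M * ρ ^ (n + 1) := by
          calc |1 - ε| ≤ |(1:ℝ)| + |ε| := abs_sub _ _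
            _ ≤ 1 + M * ρ ^ (n + 1) := by rw [abs_one]; linarith
        have e1 : |(1 - ε) * c' * (a n - L)| ≤ (1 + M * ρ ^ (n + 1)) * c' * |a n - L| := by
          rw [abs_mul, abs_mul, abs_of_nonneg hc']
          gcongr
        have e2 : |(1 - ε) * d (n + 1)| ≤ (1 + M * ρ ^ (n + 1)) * (M * ρ ^ (n + 1)) := by
          rw [abs_mul]
          apply mul_le_mul h1ε hdb (abs_nonneg _)
          positivity
        have e3 : |ε * L| ≤ M * ρ ^ (n + 1) * |L| := by
          rw [abs_mul]
          exact mul_le_mul_of_nonneg_right hε (abs_nonneg _)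
        linarith
      -- bounds on the coefficient
      have hsmall : M * ρ ^ (n + 1) ≤ (1 - q) / 2 := by
        calc M * ρ ^ (n + 1) ≤ M * ρ ^ N := by
              apply mul_le_mul_of_nonneg_left _ hM0
              exact pow_le_pow_of_le_one hρ0.le hρ.le hNn
          _ ≤ (1 - q) / 2 := hN
      have hρ1 : ρ ^ (n + 1) ≤ 1 := pow_le_one₀ hρ0.le hρ.le
      have hcoef : (1 + M * ρ ^ (n + 1)) * c' ≤ (1 + q) / 2 * ρ := by
        have hc'q : c' = q * ρ := by rw [hqdef, div_mul_cancel₀ _ hρ0.ne']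
        have hMρ : 0 ≤ M * ρ ^ (n + 1) := by positivity
        nlinarith
      have hterm1 : (1 + M * ρ ^ (n + 1)) * c' * |a n - L| ≤ (1 + q) / 2 * ρ * (K * ρ ^ n) := by
        have h1 : (1 + M * ρ ^ (n + 1)) * c' * |a n - L| ≤
            (1 + M * ρ ^ (n + 1)) * c' * (K * ρ ^ n) := by
          apply mul_le_mul_of_nonneg_left ih
          positivity
        have h2 : (1 + M * ρ ^ (n + 1)) * c' * (K * ρ ^ n) ≤ (1 + q) / 2 * ρ * (K * ρ ^ n) := by
          apply mul_le_mul_of_nonneg_right hcoef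
          positivity
        linarith
      have hterm2 : (1 + M * ρ ^ (n + 1)) * (M * ρ ^ (n + 1)) + M * ρ ^ (n + 1) * |L| ≤
          B * ρ ^ (n + 1) := by
        have hMρ : 0 ≤ M * ρ ^ (n + 1) := by positivity
        have hpos : (0:ℝ) ≤ ρ ^ (n + 1) := by positivity
        have key : (0:ℝ) ≤ M * M * (ρ ^ (n + 1) * (1 - ρ ^ (n + 1))) :=
          mul_nonneg (mul_nonneg hM0 hM0) (mul_nonneg hpos (by linarith))
        rw [hBdef]
        nlinarith [key]
      have hfin : (1 + q) / 2 * ρ * (K * ρ ^ n) + B * ρ ^ (n + 1) ≤ K * ρ ^ (n + 1) := by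
        have hpn : (0:ℝ) ≤ ρ ^ n := by positivity
        have e : ρ ^ (n + 1) = ρ * ρ ^ n := by ring
        rw [e]
        have h5 : B * (ρ * ρ ^ n) ≤ K * (1 - q) / 2 * (ρ * ρ ^ n) :=
          mul_le_mul_of_nonneg_right hKB' (by positivity)
        have h6 : (1 + q) / 2 * ρ * (K * ρ ^ n) + K * (1 - q) / 2 * (ρ * ρ ^ n)
            = K * (ρ * ρ ^ n) := by ring
        linarith
      linarith
end

section
/- The even moments γ_{2ℓ} of ξ ~ N(0, γ_2) satisfy, for every k ≥ 1, the self-consistency relation γ_k = 2^{-(k-2)/2} γ_k + 2^{-k/2} Σ_{m=1}^{k-1} C(k,m) γ_m γ_{k-m}, where γ_m = E(ξ^m) (so odd moments vanish). Equivalently, (1 − 2^{-(k-2)/2}) γ_k = 2^{-k/2} Σ_{m=1}^{k-1} C(k,m) γ_m γ_{k-m}. -/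
open Finset

open Nat


lemma fact2 (j : ℕ) : (2*j)! = 2^j * j ! * (2*j - 1)‼ := by
  cases j with
  | zero => rfl
  | succ n =>
    rw [show 2*(n+1) - 1 = 2*n+1 from by omega,
        show 2*(n+1) = 2*n+1+1 from by ring,
        Nat.factorial_eq_mul_doubleFactorial,
        show 2*n+1+1 = 2*(n+1) from by ring,
        Nat.doubleFactorial_two_mul]

lemma term_eq (l j : ℕ) (hj : j ≤ l) :
    ((2*l).choose (2*j) : ℝ) * ((2*j - 1)‼ : ℕ) * ((2*(l-j) - 1)‼ : ℕ)
    = ((2*l - 1)‼ : ℕ) * (l.choose j : ℕ) := by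
  have h1 := Nat.choose_mul_factorial_mul_factorial (Nat.mul_le_mul_left 2 hj)
  have h2 := Nat.choose_mul_factorial_mul_factorial hj
  rw [show 2*l - 2*j = 2*(l-j) from by omega] at h1
  rw [fact2 j, fact2 (l-j), fact2 l] at h1
  have h1' : ((2*l).choose (2*j) : ℝ) * ((2:ℝ)^j * (j ! : ℕ) * ((2*j-1)‼ : ℕ)) *
      ((2:ℝ)^(l-j) * ((l-j)! : ℕ) * ((2*(l-j)-1)‼ : ℕ))
      = (2:ℝ)^l * (l ! : ℕ) * ((2*l-1)‼ : ℕ) := by exact_mod_cast h1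
  have h2' : (l.choose j : ℝ) * (j ! : ℕ) * ((l-j)! : ℕ) = (l ! : ℕ) := by exact_mod_cast h2
  have hp : (2:ℝ)^j * (2:ℝ)^(l-j) = (2:ℝ)^l := by
    rw [← pow_add]; congr 1; omega
  have hne : ((2:ℝ)^l * ((j !:ℕ) : ℝ) * (((l-j)! : ℕ) : ℝ)) ≠ 0 := by
    have := j.factorial_pos; have := (l-j).factorial_pos; positivity
  refine mul_right_cancel₀ hne ?_
  calc ((2*l).choose (2*j) : ℝ) * ((2*j - 1)‼ : ℕ) * ((2*(l-j) - 1)‼ : ℕ) *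
        ((2:ℝ)^l * ((j !:ℕ):ℝ) * (((l-j)! : ℕ):ℝ))
      = ((2*l).choose (2*j) : ℝ) * ((2:ℝ)^j * (j ! : ℕ) * ((2*j-1)‼ : ℕ)) *
        ((2:ℝ)^(l-j) * ((l-j)! : ℕ) * ((2*(l-j)-1)‼ : ℕ)) := by rw [← hp]; ring
    _ = (2:ℝ)^l * (l ! : ℕ) * ((2*l-1)‼ : ℕ) := h1'
    _ = (2:ℝ)^l * ((l.choose j : ℝ) * (j ! : ℕ) * ((l-j)! : ℕ)) * ((2*l-1)‼ : ℕ) := by rw [h2']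
    _ = ((2*l - 1)‼ : ℕ) * (l.choose j : ℕ) * ((2:ℝ)^l * ((j !:ℕ):ℝ) * (((l-j)! : ℕ):ℝ)) := by ring

lemma choose_sum (l : ℕ) (hl : 1 ≤ l) :
    ∑ j ∈ Ioo 0 l, ((l.choose j : ℕ) : ℝ) = 2^l - 2 := by
  have e1 : ∑ j ∈ range (l+1), ((l.choose j : ℕ) : ℝ) = 2^l := by
    rw [← Nat.cast_sum, Nat.sum_range_choose]; push_cast; ring
  have e2 : range (l+1) = insert 0 (insert l (Ioo 0 l)) := by
    ext x; simp; omega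
  rw [e2, Finset.sum_insert (by simp; omega), Finset.sum_insert (by simp)] at e1
  simp only [Nat.choose_zero_right, Nat.choose_self, Nat.cast_one] at e1
  linarith

/-- The moments γ_m = E(ξ^m) of ξ ~ N(0, γ₂) (γ₂ > 0), i.e.
γ_{2ℓ} = (2ℓ−1)!! γ₂^ℓ and γ_{2ℓ+1} = 0, satisfy for every k ≥ 1:
γ_k = 2^{-(k-2)/2} γ_k + 2^{-k/2} Σ_{m=1}^{k-1} C(k,m) γ_m γ_{k-m}, equivalently
(1 − 2^{-(k-2)/2}) γ_k = 2^{-k/2} Σ_{m=1}^{k-1} C(k,m) γ_m γ_{k-m}. -/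
theorem stmt_18 (γ₂ : ℝ) (hγ₂ : 0 < γ₂) (g : ℕ → ℝ)
    (hgeven : ∀ ℓ : ℕ, g (2 * ℓ) = (Nat.doubleFactorial (2 * ℓ - 1) : ℝ) * γ₂ ^ ℓ)
    (hgodd : ∀ ℓ : ℕ, g (2 * ℓ + 1) = 0)
    (k : ℕ) (hk : 1 ≤ k) :
    g k = (2 : ℝ) ^ (-(((k : ℝ) - 2) / 2)) * g k
        + (2 : ℝ) ^ (-((k : ℝ) / 2)) * ∑ m ∈ Finset.Ioo 0 k, (Nat.choose k m : ℝ) * g m * g (k - m)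
    ∧ (1 - (2 : ℝ) ^ (-(((k : ℝ) - 2) / 2))) * g k
        = (2 : ℝ) ^ (-((k : ℝ) / 2)) * ∑ m ∈ Finset.Ioo 0 k, (Nat.choose k m : ℝ) * g m * g (k - m) := by
  have hmain : (1 - (2 : ℝ) ^ (-(((k : ℝ) - 2) / 2))) * g k
      = (2 : ℝ) ^ (-((k : ℝ) / 2)) * ∑ m ∈ Finset.Ioo 0 k, (Nat.choose k m : ℝ) * g m * g (k - m) := by
    rcases Nat.even_or_odd k with ⟨l, hl⟩ | ⟨l, hl⟩
    · -- even case
      subst hl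
      rw [show l + l = 2*l from by ring] at *
      have hl1 : 1 ≤ l := by omega
      have hgk := hgeven l
      have hS : (∑ m ∈ Ioo 0 (2*l), ((2*l).choose m : ℝ) * g m * g (2*l - m))
          = ∑ j ∈ Ioo 0 l, ((2*l).choose (2*j) : ℝ) * g (2*j) * g (2*l - 2*j) := by
        have himage : ∑ m ∈ (Ioo 0 l).image (fun j => 2*j),
              ((2*l).choose m : ℝ) * g m * g (2*l - m)
            = ∑ j ∈ Ioo 0 l, ((2*l).choose (2*j) : ℝ) * g (2*j) * g (2*l - 2*j) := by
          rw [Finset.sum_image]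
          intro x _ y _ h
          simp only at h
          omega
        rw [← himage]
        symm
        apply Finset.sum_subset
        · intro x hx
          simp only [Finset.mem_image, Finset.mem_Ioo] at hx ⊢
          obtain ⟨j, ⟨h1, h2⟩, rfl⟩ := hx
          omega
        · intro x hx hx2
          have hodd : Odd x := by
            by_contra h
            rw [Nat.not_odd_iff_even] at h
            obtain ⟨a, ha⟩ := h
            apply hx2
            simp only [Finset.mem_image, Finset.mem_Ioo] at hx ⊢
            exact ⟨a, ⟨by omega, by omega⟩, by omega⟩
          obtain ⟨a, ha⟩ := hodd
          rw [ha, hgodd]; ring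
      have hS2 : ∑ j ∈ Ioo 0 l, ((2*l).choose (2*j) : ℝ) * g (2*j) * g (2*l - 2*j)
          = ((2^l : ℝ) - 2) * ((2*l - 1)‼ : ℕ) * γ₂ ^ l := by
        have : ∀ j ∈ Ioo 0 l, ((2*l).choose (2*j) : ℝ) * g (2*j) * g (2*l - 2*j)
            = ((l.choose j : ℕ) : ℝ) * (((2*l - 1)‼ : ℕ) * γ₂ ^ l) := by
          intro j hj
          simp only [Finset.mem_Ioo] at hj
          rw [show 2*l - 2*j = 2*(l-j) from by omega, hgeven, hgeven]
          have ht := term_eq l j (le_of_lt hj.2)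
          have hpow : γ₂ ^ j * γ₂ ^ (l-j) = γ₂ ^ l := by
            rw [← pow_add]; congr 1; omega
          calc ((2*l).choose (2*j) : ℝ) * (((2*j - 1)‼ : ℕ) * γ₂ ^ j) *
                ((((2*(l-j)) - 1)‼ : ℕ) * γ₂ ^ (l-j))
              = (((2*l).choose (2*j) : ℝ) * ((2*j - 1)‼ : ℕ) * ((2*(l-j) - 1)‼ : ℕ)) *
                (γ₂ ^ j * γ₂ ^ (l-j)) := by ring
            _ = (((2*l - 1)‼ : ℕ) * (l.choose j : ℕ)) * γ₂ ^ l := by rw [ht, hpow]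
            _ = ((l.choose j : ℕ) : ℝ) * (((2*l - 1)‼ : ℕ) * γ₂ ^ l) := by ring
        rw [Finset.sum_congr rfl this, ← Finset.sum_mul, choose_sum l hl1]
        ring
      have hA : (2:ℝ) ^ (-((((2*l : ℕ) : ℝ) - 2) / 2)) = 2 * ((2:ℝ)^l)⁻¹ := by
        rw [show (-((((2*l : ℕ) : ℝ) - 2) / 2)) = (((1 - (l:ℤ)) : ℤ) : ℝ) from by push_cast; ring,
            Real.rpow_intCast, zpow_sub₀ (by norm_num), zpow_one, zpow_natCast]
        ring
      have hB : (2:ℝ) ^ (-(((2*l : ℕ) : ℝ) / 2)) = ((2:ℝ)^l)⁻¹ := by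
        rw [show (-(((2*l : ℕ) : ℝ) / 2)) = (((- (l:ℤ)) : ℤ) : ℝ) from by push_cast; ring,
            Real.rpow_intCast, zpow_neg, zpow_natCast]
      rw [hA, hB, hS, hS2, hgk]
      have h2l : (0:ℝ) < 2^l := by positivity
      field_simp
    · -- odd case
      subst hl
      have hgk := hgodd l
      have hS : (∑ m ∈ Ioo 0 (2*l+1), ((2*l+1).choose m : ℝ) * g m * g (2*l+1 - m)) = 0 := by
        apply Finset.sum_eq_zero
        intro m hm
        simp only [Finset.mem_Ioo] at hm
        rcases Nat.even_or_odd m with ⟨a, ha⟩ | ⟨a, ha⟩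
        · have : 2*l+1 - m = 2*(l-a)+1 := by omega
          rw [this, hgodd]; ring
        · rw [show m = 2*a+1 from by omega, hgodd]; ring
      rw [hS, hgk]
      ring
  exact ⟨by linarith, hmain⟩
end
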